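/- arXiv:2208.03313 — 2 statements merged into one kernel-verified Lean document; each statement's English description precedes it below -/
import Mathlib

section
/- Let $\lambda > 1$ and let $\lambda_{\max}$ be a real number satisfying $|\lambda_{\max} - \lambda - 1/\lambda| \le \Delta$ for some $\Delta$ with $0 \le \Delta \le \lambda + 1/\lambda$ and $\lambda_{\max} \ge 2$. Define $\widetilde{\lambda} = (\lambda_{\max} + \sqrt{\lambda_{\max}^2 - 4})/2$. Then $|\widetilde{\lambda} - \lambda| \le 4\Delta\lambda/(\lambda - 1)$. -/
set_option maxHeartbeats 800000


/-- If `λ > 1` and `λmax ≥ 2` satisfies `|λmax − λ − 1/λ| ≤ Δ` with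
`0 ≤ Δ ≤ λ + 1/λ`, then `λ̃ = (λmax + √(λmax² − 4))/2` satisfies
`|λ̃ − λ| ≤ 4Δλ/(λ − 1)`. -/
theorem stmt_3 (lam lammax Δ : ℝ) (hlam : 1 < lam)
    (hΔ0 : 0 ≤ Δ) (hΔ : Δ ≤ lam + 1 / lam)
    (habs : |lammax - lam - 1 / lam| ≤ Δ) (h2 : 2 ≤ lammax) :
    |(lammax + Real.sqrt (lammax ^ 2 - 4)) / 2 - lam| ≤ 4 * Δ * lam / (lam - 1) := by
  have hl0 : 0 < lam := by linarith
  have hinv : lam * (1 / lam) = 1 := by field_simp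
  have hinvpos : 0 < 1 / lam := by positivity
  have hinvlt : 1 / lam < 1 := by rw [div_lt_one hl0]; exact hlam
  obtain ⟨t, ht⟩ : ∃ t, t = Real.sqrt (lammax ^ 2 - 4) := ⟨_, rfl⟩
  rw [← ht]
  have h4 : (0:ℝ) ≤ lammax ^ 2 - 4 := by nlinarith
  have ht0 : 0 ≤ t := ht ▸ Real.sqrt_nonneg _
  have ht2 : t ^ 2 = lammax ^ 2 - 4 := by rw [ht]; exact Real.sq_sqrt h4
  obtain ⟨s, hsdef⟩ : ∃ s, s = lam - 1 / lam := ⟨_, rfl⟩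
  have hs0 : 0 < s := by rw [hsdef]; linarith
  have hs2 : s ^ 2 = (lam + 1/lam) ^ 2 - 4 := by
    rw [hsdef]; field_simp; ring
  have hab := abs_le.mp habs
  obtain ⟨k, hk⟩ : ∃ k, k = |t - s| := ⟨_, rfl⟩
  have hk0 : 0 ≤ k := hk ▸ abs_nonneg _
  have hk1 : t - s ≤ k := hk ▸ le_abs_self _
  have hk2 : -(t - s) ≤ k := hk ▸ neg_le_abs _
  have ha : k * s ≤ Δ * (lammax + (lam + 1/lam)) := by
    have h1 : k * s ≤ k * (t + s) := by nlinarith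
    have h2' : k * (t + s) = |t^2 - s^2| := by
      rw [hk, ← abs_of_nonneg (by linarith : (0:ℝ) ≤ t + s), ← abs_mul]
      ring_nf
    have h3 : |t^2 - s^2| = |lammax - (lam + 1/lam)| * (lammax + (lam + 1/lam)) := by
      rw [ht2, hs2]
      rw [← abs_of_nonneg (by linarith : (0:ℝ) ≤ lammax + (lam + 1/lam)), ← abs_mul]
      ring_nf
    have h5 : |lammax - (lam + 1/lam)| ≤ Δ := by
      have he : lammax - (lam + 1/lam) = lammax - lam - 1/lam := by ring
      rw [he]; exact habs
    calc k * s ≤ k * (t+s) := h1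
      _ = |lammax - (lam + 1/lam)| * (lammax + (lam + 1/lam)) := by rw [h2', h3]
      _ ≤ Δ * (lammax + (lam + 1/lam)) := by nlinarith
  have hlmub : lammax ≤ 2 * (lam + 1/lam) := by
    have := hab.2; linarith
  have ha2 : k * s ≤ 3 * Δ * (lam + 1/lam) := by nlinarith
  rw [abs_le]
  have hss : s * lam = lam^2 - 1 := by rw [hsdef]; field_simp
  have hkl : k * (lam^2 - 1) ≤ 3 * Δ * (lam^2 + 1) := by
    calc k * (lam^2 - 1) = (k * s) * lam := by rw [← hss]; ring
      _ ≤ (3 * Δ * (lam + 1/lam)) * lam := mul_le_mul_of_nonneg_right ha2 hl0.le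
      _ = 3 * Δ * (lam^2 + 1) := by
          have hmu : (lam + 1/lam) * lam = lam^2 + 1 := by field_simp
          rw [← hmu]; ring
  have key : (Δ + k) * (lam - 1) ≤ 8 * Δ * lam := by
    have hpos : (0:ℝ) < lam + 1 := by linarith
    rw [← mul_le_mul_iff_of_pos_right hpos]
    nlinarith [hkl, mul_nonneg hΔ0 hl0.le, mul_nonneg hΔ0 (mul_nonneg hl0.le hl0.le)]
  have hfin : (Δ + k) / 2 ≤ 4 * Δ * lam / (lam - 1) := by
    rw [div_le_div_iff₀ (by norm_num) (by linarith : (0:ℝ) < lam - 1)]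
    linarith [key]
  constructor
  · have step : lam - (lammax + t)/2 ≤ (Δ + k)/2 := by
      have h7 : t ≥ s - k := by linarith
      have h6 : lammax ≥ lam + 1/lam - Δ := by linarith [hab.1]
      rw [hsdef] at h7
      linarith
    linarith
  · have step : (lammax + t)/2 - lam ≤ (Δ + k)/2 := by
      have h7 : t ≤ s + k := by linarith
      have h6 : lammax ≤ lam + 1/lam + Δ := by linarith [hab.2]
      rw [hsdef] at h7
      linarith
    linarith
end

section
/- For every real number $\alpha$ with $0 < \alpha \le 2$, the integral $\int \tanh(\alpha^2 + \alpha x)\,\varphi(dx)$ against the standard Gaussian density satisfies $c\,\alpha^2 \le \int \tanh(\alpha^2 + \alpha x)\,\varphi(dx) \le 2\alpha^2 + \alpha^4$ for some universal constant $c > 0$. -/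
open MeasureTheory ProbabilityTheory
open scoped NNReal

lemma my_continuous_tanh : Continuous Real.tanh := by
  have : Real.tanh = fun x => Real.sinh x / Real.cosh x := funext Real.tanh_eq_sinh_div_cosh
  rw [this]
  exact Real.continuous_sinh.div Real.continuous_cosh fun x => (Real.cosh_pos x).ne'

lemma my_hasDerivAt_tanh (x : ℝ) :
    HasDerivAt Real.tanh ((Real.cosh x ^ 2)⁻¹) x := by
  have h : HasDerivAt (fun y => Real.sinh y / Real.cosh y)
      ((Real.cosh x * Real.cosh x - Real.sinh x * Real.sinh x) / Real.cosh x ^ 2) x :=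
    (Real.hasDerivAt_sinh x).div (Real.hasDerivAt_cosh x) (Real.cosh_pos x).ne'
  have he : Real.tanh = fun y => Real.sinh y / Real.cosh y := funext Real.tanh_eq_sinh_div_cosh
  have heq : (Real.cosh x * Real.cosh x - Real.sinh x * Real.sinh x) / Real.cosh x ^ 2
      = (Real.cosh x ^ 2)⁻¹ := by
    rw [show Real.cosh x * Real.cosh x - Real.sinh x * Real.sinh x
        = Real.cosh x ^ 2 - Real.sinh x ^ 2 by ring, Real.cosh_sq_sub_sinh_sq, one_div]
  rw [he]
  exact heq ▸ h

/-- MVT for tanh on an interval of half-length `b` around `a`. -/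
lemma my_tanh_mvt (a b : ℝ) (hb : 0 < b) :
    ∃ ξ ∈ Set.Ioo (a - b) (a + b),
      Real.tanh (b + a) + Real.tanh (b - a) = 2 * b * (Real.cosh ξ ^ 2)⁻¹ := by
  have hlt : a - b < a + b := by linarith
  obtain ⟨ξ, hξ, hslope⟩ := exists_hasDerivAt_eq_slope Real.tanh
    (fun y => (Real.cosh y ^ 2)⁻¹) hlt
    (my_continuous_tanh.continuousOn) (fun y _ => my_hasDerivAt_tanh y)
  refine ⟨ξ, hξ, ?_⟩
  have h2b : (a + b) - (a - b) = 2 * b := by ring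
  rw [h2b, eq_div_iff (by positivity : (2:ℝ) * b ≠ 0)] at hslope
  calc Real.tanh (b + a) + Real.tanh (b - a)
      = Real.tanh (a + b) - Real.tanh (a - b) := by
        rw [show b - a = -(a - b) by ring, Real.tanh_neg, add_comm b a]; ring
    _ = 2 * b * (Real.cosh ξ ^ 2)⁻¹ := by rw [← hslope]; ring

lemma my_sum_nonneg (a b : ℝ) (hb : 0 < b) :
    0 ≤ Real.tanh (b + a) + Real.tanh (b - a) := by
  obtain ⟨ξ, _, h⟩ := my_tanh_mvt a b hb
  rw [h]; positivity

lemma my_sum_le (a b : ℝ) (hb : 0 < b) :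
    Real.tanh (b + a) + Real.tanh (b - a) ≤ 2 * b := by
  obtain ⟨ξ, _, h⟩ := my_tanh_mvt a b hb
  rw [h]
  have h1 : 1 ≤ Real.cosh ξ ^ 2 := by nlinarith [Real.one_le_cosh ξ]
  have h2 : (Real.cosh ξ ^ 2)⁻¹ ≤ 1 := by
    rw [inv_le_one_iff₀]; right; exact h1
  nlinarith

lemma my_sum_ge (a b : ℝ) (hb : 0 < b) (ha : |a| ≤ 2) (hb4 : b ≤ 4) :
    2 * b * (Real.cosh 6 ^ 2)⁻¹ ≤ Real.tanh (b + a) + Real.tanh (b - a) := by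
  obtain ⟨ξ, hξ, h⟩ := my_tanh_mvt a b hb
  rw [h]
  have habs : |ξ| ≤ |(6 : ℝ)| := by
    rw [abs_le] at ha ⊢
    rw [abs_of_nonneg (by norm_num : (0:ℝ) ≤ 6)]
    obtain ⟨h1, h2⟩ := hξ
    constructor <;> nlinarith [ha.1, ha.2]
  have hc : Real.cosh ξ ≤ Real.cosh 6 := Real.cosh_le_cosh.2 habs
  have hcp := Real.cosh_pos ξ
  have hcp6 := Real.cosh_pos (6 : ℝ)
  have hinv : (Real.cosh 6 ^ 2)⁻¹ ≤ (Real.cosh ξ ^ 2)⁻¹ := by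
    apply inv_anti₀ (by positivity)
    nlinarith
  nlinarith

lemma my_tanh_abs_le_one (x : ℝ) : |Real.tanh x| ≤ 1 := by
  rw [Real.tanh_eq_sinh_div_cosh, abs_div, abs_of_pos (Real.cosh_pos x),
    div_le_one (Real.cosh_pos x)]
  have h1 := Real.cosh_sub_sinh x
  have h2 := Real.cosh_add_sinh x
  have e1 := Real.exp_pos (-x)
  have e2 := Real.exp_pos x
  rw [abs_le]; constructor <;> nlinarith

lemma my_gauss_neg : (gaussianReal 0 1).map (fun x : ℝ => -x) = gaussianReal 0 1 := by
  have h := gaussianReal_map_const_mul (μ := 0) (v := 1) (-1 : ℝ)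
  have hfun : (fun x : ℝ => -x) = (fun x : ℝ => (-1) * x) := by funext x; ring
  have hv : (NNReal.mk ((-1 : ℝ) ^ 2) (sq_nonneg _)) * 1 = 1 := by
    ext; norm_num
  rw [hfun]
  rw [show (fun x : ℝ => (-1) * x) = ((-1 : ℝ) * ·) from rfl, h, hv]
  norm_num

set_option maxHeartbeats 1000000 in
/-- For `0 < α ≤ 2`, the standard Gaussian integral of `tanh(α² + αx)` is of order `α²`:
it is bounded below by `c·α²` for a universal constant `c > 0` and above by `2α² + α⁴`. -/
theorem stmt_4 :
    ∃ c : ℝ, 0 < c ∧ ∀ α : ℝ, 0 < α → α ≤ 2 →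
      c * α ^ 2 ≤ ∫ x, Real.tanh (α ^ 2 + α * x) ∂(gaussianReal 0 1) ∧
      ∫ x, Real.tanh (α ^ 2 + α * x) ∂(gaussianReal 0 1) ≤ 2 * α ^ 2 + α ^ 4 := by
  have hm_ne_top : gaussianReal 0 1 (Set.Icc (-1 : ℝ) 1) ≠ ⊤ := measure_ne_top _ _
  have hm_ne : gaussianReal 0 1 (Set.Icc (-1 : ℝ) 1) ≠ 0 := by
    intro h0
    have habs := gaussianReal_absolutelyContinuous' 0 (one_ne_zero : (1 : ℝ≥0) ≠ 0)
    have hv := habs h0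
    rw [Real.volume_Icc] at hv
    norm_num at hv
  have hm_pos : 0 < (gaussianReal 0 1 (Set.Icc (-1 : ℝ) 1)).toReal :=
    ENNReal.toReal_pos hm_ne hm_ne_top
  refine ⟨(Real.cosh 6 ^ 2)⁻¹ * (gaussianReal 0 1 (Set.Icc (-1 : ℝ) 1)).toReal,
    by positivity, ?_⟩
  intro α hα hα2
  set f : ℝ → ℝ := fun x => Real.tanh (α ^ 2 + α * x) with hf
  have hcont : Continuous f := my_continuous_tanh.comp (by continuity)
  have hbd : ∀ x : ℝ, ‖f x‖ ≤ 1 := fun x => by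
    simpa using my_tanh_abs_le_one (α ^ 2 + α * x)
  have hint : Integrable f (gaussianReal 0 1) :=
    Integrable.mono' (integrable_const 1) hcont.aestronglyMeasurable
      (Filter.Eventually.of_forall hbd)
  have hint' : Integrable (fun x => f (-x)) (gaussianReal 0 1) :=
    Integrable.mono' (integrable_const 1)
      (hcont.comp continuous_neg).aestronglyMeasurable
      (Filter.Eventually.of_forall fun x => hbd (-x))
  have hsym : ∫ x, f x ∂(gaussianReal 0 1) = ∫ x, f (-x) ∂(gaussianReal 0 1) := by
    conv_lhs => rw [← my_gauss_neg]
    rw [integral_map measurable_neg.aemeasurable hcont.aestronglyMeasurable]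
  have hg : ∫ x, f x ∂(gaussianReal 0 1)
      = ∫ x, (f x + f (-x)) / 2 ∂(gaussianReal 0 1) := by
    rw [integral_div, integral_add hint hint', ← hsym]
    ring
  have hb : (0 : ℝ) < α ^ 2 := by positivity
  have hkey : ∀ x : ℝ, f x + f (-x)
      = Real.tanh (α ^ 2 + α * x) + Real.tanh (α ^ 2 - α * x) := by
    intro x
    simp only [hf]
    ring_nf
  constructor
  · -- lower bound
    rw [hg]
    have hle : ∀ x : ℝ,
        Set.indicator (Set.Icc (-1 : ℝ) 1) (fun _ => (Real.cosh 6 ^ 2)⁻¹ * α ^ 2) x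
          ≤ (f x + f (-x)) / 2 := by
      intro x
      by_cases hx : x ∈ Set.Icc (-1 : ℝ) 1
      · rw [Set.indicator_of_mem hx, hkey x]
        have ha : |α * x| ≤ 2 := by
          rw [abs_mul, abs_of_pos hα]
          have hx1 : |x| ≤ 1 := abs_le.2 ⟨hx.1, hx.2⟩
          nlinarith [abs_nonneg x]
        have hs := my_sum_ge (α * x) (α ^ 2) hb ha (by nlinarith)
        have hrw : (Real.cosh 6 ^ 2)⁻¹ * α ^ 2
            = (2 * α ^ 2 * (Real.cosh 6 ^ 2)⁻¹) / 2 := by ring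
        rw [hrw]
        linarith
      · rw [Set.indicator_of_notMem hx, hkey x]
        linarith [my_sum_nonneg (α * x) (α ^ 2) hb]
    have hind : Integrable
        (Set.indicator (Set.Icc (-1 : ℝ) 1) (fun _ => (Real.cosh 6 ^ 2)⁻¹ * α ^ 2))
        (gaussianReal 0 1) :=
      (integrable_const _).indicator measurableSet_Icc
    have hmono := integral_mono hind ((hint.add hint').div_const 2) hle
    simp only [Pi.add_apply] at hmono
    rw [integral_indicator_const _ measurableSet_Icc] at hmono
    calc (Real.cosh 6 ^ 2)⁻¹ * (gaussianReal 0 1 (Set.Icc (-1 : ℝ) 1)).toReal * α ^ 2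
        = (gaussianReal 0 1 (Set.Icc (-1 : ℝ) 1)).toReal
            • ((Real.cosh 6 ^ 2)⁻¹ * α ^ 2) := by
          rw [smul_eq_mul]; ring
      _ ≤ _ := hmono
  · -- upper bound
    rw [hg]
    have hle : ∀ x : ℝ, (f x + f (-x)) / 2 ≤ α ^ 2 := by
      intro x
      rw [hkey x]
      linarith [my_sum_le (α * x) (α ^ 2) hb]
    have hmono := integral_mono ((hint.add hint').div_const 2)
      (integrable_const (α ^ 2)) hle
    simp only [Pi.add_apply] at hmono
    rw [integral_const] at hmono
    simp only [probReal_univ, measure_univ, ENNReal.toReal_one, one_smul] at hmono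
    nlinarith [hmono]
end
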